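/- arXiv:0803.3590 — 2 statements merged into one kernel-verified Lean document; each statement's English description precedes it below -/
import Mathlib

section
/- For k ∈ ℤ fixed and ε → 0, the product ∏_{i=0}^{3·4^k/ε - 1} (4^k/2 + iε)/(4^k/2 + iε + ε) is bounded above by (1 - 2ε/(7·4^k))^{3·4^k/ε}, which converges to e^{-6/7} as ε → 0. -/
open Real Filter Set

theorem stmt8 (k : ℤ) (a : ℝ) (ha : a = (4:ℝ)^k) :
    (∀ ε : ℝ, 0 < ε → ∀ n : ℕ, (n : ℝ) * ε = 3 * a →
      ∏ i ∈ Finset.range n, (a/2 + i*ε)/(a/2 + i*ε + ε)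
        ≤ (1 - 2*ε/(7*a))^(n : ℕ)) ∧
    Tendsto (fun ε : ℝ => (1 - 2*ε/(7*a))^(3*a/ε))
      (nhdsWithin 0 (Ioi 0)) (nhds (Real.exp (-6/7))) := by
  have ha0 : 0 < a := ha ▸ zpow_pos (by norm_num) k
  constructor
  · intro ε hε n hn
    calc ∏ i ∈ Finset.range n, (a/2 + i*ε)/(a/2 + i*ε + ε)
        ≤ ∏ _i ∈ Finset.range n, (1 - 2*ε/(7*a)) := by
          apply Finset.prod_le_prod
          · intro i _
            have h1 : (0:ℝ) ≤ a/2 + i*ε := by positivity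
            have h2 : (0:ℝ) < a/2 + i*ε + ε := by positivity
            positivity
          · intro i hi
            have hi' : (i:ℝ) + 1 ≤ n := by
              have := Finset.mem_range.mp hi
              exact_mod_cast this
            have hd : (0:ℝ) < a/2 + i*ε + ε := by positivity
            rw [div_le_iff₀ hd]
            have hle : a/2 + i*ε + ε ≤ 7*a/2 := by nlinarith
            have h7 : (0:ℝ) < 7*a := by linarith
            have : 2*ε/(7*a) * (a/2 + i*ε + ε) ≤ ε := by
              rw [div_mul_eq_mul_div, div_le_iff₀ h7]
              nlinarith
            nlinarith
      _ = (1 - 2*ε/(7*a))^(n : ℕ) := by simp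
  · have h3a : 0 < 3*a := by linarith
    have htop : Tendsto (fun ε : ℝ => 3*a/ε) (nhdsWithin 0 (Ioi 0)) atTop := by
      simpa [div_eq_mul_inv] using (tendsto_inv_nhdsGT_zero).const_mul_atTop h3a
    have := (tendsto_one_add_div_rpow_exp (-6/7)).comp htop
    apply this.congr'
    filter_upwards [self_mem_nhdsWithin] with ε (hε : ε ∈ Ioi (0:ℝ))
    have hε0 : ε ≠ 0 := ne_of_gt hε
    have : (1:ℝ) + (-6/7) / (3*a/ε) = 1 - 2*ε/(7*a) := by
      field_simp
      ring
    simp [Function.comp, this]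
end

section
/- Monotone coupling: let B : [0,∞) → ℝ be continuous and let X and X̄ be two attracted processes driven by the same B (solving X' = (1 + B - X)^{-γ} when below B, reflected at B), with initial distances d = B(0) - X(0) and d̄ = B(0) - X̄(0) satisfying 0 ≤ d < d̄. Then B(t) - X̄(t) ≥ B(t) - X(t) for all t ≥ 0, with equality for all t ≥ r whenever both distances vanish at time r. -/
open Real

/-- Remaining distance of the attracted particle to the (constant) level after
drifting for time `t`, starting at distance `b`; it is `0` once the level is reached. -/
noncomputable def Hdist (γ t b : ℝ) : ℝ :=
  if (γ+1)*t ≤ (b+1)^(γ+1) - 1 then ((b+1)^(γ+1) - (γ+1)*t)^(1/(γ+1)) - 1 else 0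

/-- Distance of the attracted process to the step function at the beginning of the
`i`-th constancy interval (just after the jump), for jump times `σ`, values `β`
and initial value `x₀`.  The distance is capped at `0` from below: the attracted
process never crosses the driving step function. -/
noncomputable def distSeq (γ : ℝ) (σ β : ℕ → ℝ) (x₀ : ℝ) : ℕ → ℝ
  | 0 => max (β 0 - x₀) 0
  | (i+1) => max (Hdist γ (σ (i+1) - σ i) (distSeq γ σ β x₀ i) + β (i+1) - β i) 0

/-- Index of the constancy interval containing time `t`. -/
noncomputable def intervalIdx (σ : ℕ → ℝ) (t : ℝ) : ℕ := sInf {i : ℕ | t < σ (i+1)}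

/-- The piecewise constant driving function. -/
noncomputable def stepB (σ β : ℕ → ℝ) (t : ℝ) : ℝ := β (intervalIdx σ t)

/-- The attracted process driven by the step function `(σ, β)`, started at `x₀`:
on each interval of constancy it follows the explicit solution of
`f' = (1 + B - f)^{-γ}`, capped at the level of the step function. -/
noncomputable def attracted (γ : ℝ) (σ β : ℕ → ℝ) (x₀ : ℝ) (t : ℝ) : ℝ :=
  β (intervalIdx σ t) -
    Hdist γ (t - σ (intervalIdx σ t)) (distSeq γ σ β x₀ (intervalIdx σ t))

lemma Hdist_mono {γ : ℝ} (hγ : 0 < γ) (s : ℝ) {b b' : ℝ} (hb : 0 ≤ b) (hbb : b ≤ b') :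
    Hdist γ s b ≤ Hdist γ s b' := by
  have he : (0:ℝ) < γ + 1 := by linarith
  have key : (b+1)^(γ+1) ≤ (b'+1)^(γ+1) :=
    Real.rpow_le_rpow (by linarith) (by linarith) he.le
  unfold Hdist
  split_ifs with h h' h'
  · have h0 : (0:ℝ) ≤ (b+1)^(γ+1) - (γ+1)*s := by linarith
    have := Real.rpow_le_rpow h0 (by linarith : (b+1)^(γ+1) - (γ+1)*s ≤ (b'+1)^(γ+1) - (γ+1)*s)
      (by positivity : (0:ℝ) ≤ 1/(γ+1))
    linarith
  · exact absurd (by linarith : (γ+1)*s ≤ (b'+1)^(γ+1) - 1) h'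
  · have h1 : (1:ℝ) ≤ (b'+1)^(γ+1) - (γ+1)*s := by linarith
    have := Real.one_le_rpow h1 (by positivity : (0:ℝ) ≤ 1/(γ+1))
    linarith
  · exact le_refl 0

lemma Hdist_eq_zero_iff {γ : ℝ} (hγ : 0 < γ) (s b : ℝ) :
    Hdist γ s b = 0 ↔ (b+1)^(γ+1) - 1 ≤ (γ+1)*s := by
  have he : (0:ℝ) < 1/(γ+1) := by positivity
  unfold Hdist
  split_ifs with h
  · constructor
    · intro h0
      by_contra hc
      push_neg at hc
      have h1 : (1:ℝ) < (b+1)^(γ+1) - (γ+1)*s := by linarith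
      have := Real.one_lt_rpow h1 he
      linarith
    · intro h1
      have : (b+1)^(γ+1) - (γ+1)*s = 1 := by linarith
      rw [this, Real.one_rpow]
      ring
  · constructor
    · intro _; push_neg at h; linarith
    · intro _; rfl

lemma distSeq_nonneg (γ : ℝ) (σ β : ℕ → ℝ) (x₀ : ℝ) (i : ℕ) :
    0 ≤ distSeq γ σ β x₀ i := by
  cases i <;> exact le_max_right _ _

lemma distSeq_mono {γ : ℝ} (hγ : 0 < γ) (σ β : ℕ → ℝ) {x₀ xbar₀ : ℝ} (h : xbar₀ ≤ x₀) :
    ∀ i, distSeq γ σ β x₀ i ≤ distSeq γ σ β xbar₀ i := by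
  intro i
  induction i with
  | zero => exact max_le_max (by simp [sub_le_sub_left h]) le_rfl
  | succ n ih =>
      refine max_le_max ?_ le_rfl
      have := Hdist_mono hγ (σ (n+1) - σ n) (distSeq_nonneg γ σ β x₀ n) ih
      linarith

lemma intervalIdx_set_nonempty {σ : ℕ → ℝ}
    (hσ : StrictMono σ) (hσtop : Filter.Tendsto σ Filter.atTop Filter.atTop) (t : ℝ) :
    {i : ℕ | t < σ (i+1)}.Nonempty := by
  obtain ⟨n, hn⟩ := (hσtop.eventually_gt_atTop t).exists
  exact ⟨n, lt_trans hn (hσ (Nat.lt_succ_self n))⟩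

lemma intervalIdx_mem {σ : ℕ → ℝ}
    (hσ : StrictMono σ) (hσtop : Filter.Tendsto σ Filter.atTop Filter.atTop) (t : ℝ) :
    t < σ (intervalIdx σ t + 1) :=
  Nat.sInf_mem (intervalIdx_set_nonempty hσ hσtop t)

lemma intervalIdx_mono {σ : ℕ → ℝ}
    (hσ : StrictMono σ) (hσtop : Filter.Tendsto σ Filter.atTop Filter.atTop)
    {r t : ℝ} (hrt : r ≤ t) : intervalIdx σ r ≤ intervalIdx σ t :=
  Nat.sInf_le (lt_of_le_of_lt hrt (intervalIdx_mem hσ hσtop t))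

theorem stmt19 (γ : ℝ) (hγ : 0 < γ)
    (σ β : ℕ → ℝ) (hσ0 : σ 0 = 0) (hσ : StrictMono σ)
    (hσtop : Filter.Tendsto σ Filter.atTop Filter.atTop)
    (x₀ xbar₀ : ℝ) (h₀ : xbar₀ ≤ x₀) (h₀' : x₀ ≤ β 0) :
    (∀ t : ℝ, 0 ≤ t →
      stepB σ β t - attracted γ σ β x₀ t
        ≤ stepB σ β t - attracted γ σ β xbar₀ t) ∧
    (∀ r : ℝ, 0 ≤ r →
      stepB σ β r - attracted γ σ β x₀ r = 0 →
      stepB σ β r - attracted γ σ β xbar₀ r = 0 →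
      ∀ t : ℝ, r ≤ t → attracted γ σ β x₀ t = attracted γ σ β xbar₀ t) := by
  have he : (0:ℝ) < γ + 1 := by linarith
  constructor
  · intro t _
    simp only [stepB, attracted, sub_sub_cancel]
    exact Hdist_mono hγ _ (distSeq_nonneg γ σ β x₀ _) (distSeq_mono hγ σ β h₀ _)
  · intro r _ h1 h2 t hrt
    simp only [stepB, attracted, sub_sub_cancel] at h1 h2
    set i := intervalIdx σ r with hi
    -- zero-distance conditions at time r
    rw [Hdist_eq_zero_iff hγ] at h1 h2
    have hrσ : r ≤ σ (i + 1) := (intervalIdx_mem hσ hσtop r).le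
    -- propagation to the end of the interval
    have hend : (γ+1)*(r - σ i) ≤ (γ+1)*(σ (i+1) - σ i) := by
      apply mul_le_mul_of_nonneg_left _ he.le
      linarith
    -- the distance sequences agree from index i+1 on
    have Deq : ∀ k, distSeq γ σ β x₀ (i+1+k) = distSeq γ σ β xbar₀ (i+1+k) := by
      intro k
      induction k with
      | zero =>
          show distSeq γ σ β x₀ (i+1) = distSeq γ σ β xbar₀ (i+1)
          have hz1 : Hdist γ (σ (i+1) - σ i) (distSeq γ σ β x₀ i) = 0 :=
            (Hdist_eq_zero_iff hγ _ _).2 (le_trans h1 hend)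
          have hz2 : Hdist γ (σ (i+1) - σ i) (distSeq γ σ β xbar₀ i) = 0 :=
            (Hdist_eq_zero_iff hγ _ _).2 (le_trans h2 hend)
          simp [distSeq, hz1, hz2]
      | succ n ih =>
          show distSeq γ σ β x₀ (i+1+n+1) = distSeq γ σ β xbar₀ (i+1+n+1)
          simp [distSeq, ih]
    have hij : i ≤ intervalIdx σ t := intervalIdx_mono hσ hσtop hrt
    rcases eq_or_lt_of_le hij with hj | hj
    · -- same interval: both distances are zero at time t
      have ht1 : Hdist γ (t - σ i) (distSeq γ σ β x₀ i) = 0 := by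
        apply (Hdist_eq_zero_iff hγ _ _).2
        refine le_trans h1 ?_
        apply mul_le_mul_of_nonneg_left _ he.le
        linarith
      have ht2 : Hdist γ (t - σ i) (distSeq γ σ β xbar₀ i) = 0 := by
        apply (Hdist_eq_zero_iff hγ _ _).2
        refine le_trans h2 ?_
        apply mul_le_mul_of_nonneg_left _ he.le
        linarith
      simp only [attracted, ← hj, ht1, ht2]
    · -- later interval: the distance sequences coincide
      obtain ⟨k, hk⟩ : ∃ k, intervalIdx σ t = i + 1 + k :=
        ⟨intervalIdx σ t - (i+1), by omega⟩
      simp only [attracted, hk, Deq k]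
end
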